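/- arXiv:math/0107186 — 3 statements merged into one kernel-verified Lean document; each statement's English description precedes it below -/
import Mathlib

section
/- Let Ω be a symmetric complex g×g matrix whose imaginary part is not positive definite. Then the Gaussian x ↦ exp(πi x^t Ω x) does not tend to zero at infinity: there is a sequence x_n ∈ ℝ^g with |x_n| → ∞ along which |exp(πi x_n^t Ω x_n)| ≥ 1. In particular this function is not a Schwartz function on ℝ^g. -/
open Complex Filter

/-- If `Ω` is a symmetric complex `g × g` matrix whose imaginary part is not
positive definite, then the Gaussian `x ↦ exp(π i xᵗ Ω x)` does not tend to zero at
infinity: there is a sequence `x_n` with `‖x_n‖ → ∞` along which the absolute value of the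
Gaussian is `≥ 1`.  In particular this function is not a Schwartz function on `ℝ^g`. -/
theorem gaussian_not_schwartz_of_not_posDef (g : ℕ) (Ω : Matrix (Fin g) (Fin g) ℂ)
    (hsymm : Ω.IsSymm) (hnpos : ¬ (Ω.map Complex.im).PosDef) :
    (∃ x : ℕ → (Fin g → ℝ),
        Tendsto (fun n => ‖x n‖) atTop atTop ∧
        ∀ n : ℕ, 1 ≤ ‖Complex.exp ((Real.pi : ℂ) * Complex.I *
          ∑ α, ∑ β, Ω α β * ((x n) α : ℂ) * ((x n) β : ℂ))‖) ∧
      ¬ ∃ τ : SchwartzMap (Fin g → ℝ) ℂ,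
          ∀ x : Fin g → ℝ,
            τ x = Complex.exp ((Real.pi : ℂ) * Complex.I *
              ∑ α, ∑ β, Ω α β * (x α : ℂ) * (x β : ℂ)) := by
  -- get a nonzero vector with nonpositive quadratic form
  have hherm : (Ω.map Complex.im).IsHermitian := by
    rw [Matrix.IsHermitian, Matrix.conjTranspose]
    ext i j
    simp [hsymm.apply]
  rw [Matrix.posDef_iff_dotProduct_mulVec] at hnpos
  push_neg at hnpos
  obtain ⟨y, hy, hle⟩ := hnpos hherm
  set x : ℕ → (Fin g → ℝ) := fun n => (n : ℝ) • y with hx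
  have him : ∀ n : ℕ, (∑ α, ∑ β, Ω α β * ((x n) α : ℂ) * ((x n) β : ℂ)).im
      = (n : ℝ)^2 * dotProduct (star y) (Matrix.mulVec (Ω.map Complex.im) y) := by
    intro n
    rw [Complex.im_sum]
    simp only [Complex.im_sum, hx, Pi.smul_apply, smul_eq_mul]
    simp only [dotProduct, Matrix.mulVec, Matrix.map_apply, star_trivial,
      Finset.mul_sum]
    refine Finset.sum_congr rfl fun α _ => ?_
    refine Finset.sum_congr rfl fun β _ => ?_
    push_cast
    simp [Complex.mul_im, Complex.ofReal_im, Complex.ofReal_re]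
    ring
  have habs : ∀ n : ℕ, 1 ≤ ‖Complex.exp ((Real.pi : ℂ) * Complex.I *
      ∑ α, ∑ β, Ω α β * ((x n) α : ℂ) * ((x n) β : ℂ))‖ := by
    intro n
    rw [Complex.norm_exp]
    rw [show ((Real.pi : ℂ) * Complex.I *
      ∑ α, ∑ β, Ω α β * ((x n) α : ℂ) * ((x n) β : ℂ)).re
      = - Real.pi * (∑ α, ∑ β, Ω α β * ((x n) α : ℂ) * ((x n) β : ℂ)).im by
        simp [Complex.mul_re, Complex.mul_im]]
    rw [him n]
    have : 0 ≤ -Real.pi * ((n : ℝ)^2 * dotProduct (star y)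
        (Matrix.mulVec (Ω.map Complex.im) y)) := by
      have h2 : 0 ≤ (n:ℝ)^2 * (-(dotProduct (star y)
          (Matrix.mulVec (Ω.map Complex.im) y))) :=
        mul_nonneg (sq_nonneg _) (neg_nonneg.mpr hle)
      nlinarith [Real.pi_pos, h2]
    exact Real.one_le_exp this
  have hnorm : Tendsto (fun n => ‖x n‖) atTop atTop := by
    have hy' : 0 < ‖y‖ := norm_pos_iff.mpr hy
    have : (fun n : ℕ => ‖x n‖) = fun n : ℕ => (n : ℝ) * ‖y‖ := by
      funext n
      simp [hx, norm_smul, abs_of_nonneg (Nat.cast_nonneg (α := ℝ) n)]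
    rw [this]
    exact (tendsto_natCast_atTop_atTop).atTop_mul_const hy'
  refine ⟨⟨x, hnorm, habs⟩, ?_⟩
  rintro ⟨τ, hτ⟩
  have hcoc : Tendsto x atTop (cocompact (Fin g → ℝ)) := by
    rw [← Metric.cobounded_eq_cocompact, ← tendsto_norm_atTop_iff_cobounded]
    exact hnorm
  have h0 : Tendsto (fun n => τ (x n)) atTop (nhds 0) :=
    (zero_at_infty τ).comp hcoc
  have h1 : Tendsto (fun n => ‖τ (x n)‖) atTop (nhds 0) := by
    simpa using h0.norm
  have := (h1.eventually (eventually_lt_nhds (by norm_num : (0:ℝ) < 1))).exists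
  obtain ⟨n, hn⟩ := this
  rw [hτ (x n)] at hn
  exact absurd (habs n) (not_le.mpr hn)
end

section
/- Let Ω be a symmetric complex g×g matrix whose imaginary part is positive definite. Then the function z ↦ θ(z, Ω) is holomorphic (complex differentiable) on all of ℂ^g. -/
open Complex

/-- The theta-function `θ(z, Ω) = Σ_{n ∈ ℤ^g} exp(πi nᵗ Ω n + 2πi nᵗ z)` of `g`
variables. -/
noncomputable def theta (g : ℕ) (z : Fin g → ℂ) (Ω : Matrix (Fin g) (Fin g) ℂ) : ℂ :=
  ∑' n : Fin g → ℤ,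
    Complex.exp ((Real.pi : ℂ) * Complex.I * ∑ α, ∑ β, Ω α β * (n α : ℂ) * (n β : ℂ)
      + 2 * (Real.pi : ℂ) * Complex.I * ∑ α, (n α : ℂ) * z α)

lemma summable_pi_prod {g : ℕ} {v : ℤ → ℝ} (hv : Summable v) (h0 : ∀ t, 0 ≤ v t) :
    Summable fun n : Fin g → ℤ => ∏ α, v (n α) := by
  induction g with
  | zero => simpa using (Summable.of_finite (f := fun _ : Fin 0 → ℤ => (1:ℝ)))
  | succ k ih =>
    have h := hv.mul_of_nonneg ih h0 (fun n => Finset.prod_nonneg fun _ _ => h0 _)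
    have h2 : Summable ((fun n : Fin (k+1) → ℤ => ∏ α, v (n α)) ∘ (Fin.consEquiv fun _ => ℤ)) := by
      refine h.congr fun p => ?_
      simp [Fin.prod_univ_succ]
    exact (Equiv.summable_iff _).1 h2

lemma quad_lb {g : ℕ} {Y : Matrix (Fin g) (Fin g) ℝ} (hpos : Y.PosDef) :
    ∃ T > 0, ∀ x : Fin g → ℝ, T * (∑ α, x α ^ 2) ≤ ∑ α, ∑ β, Y α β * x α * x β := by
  classical
  set f : EuclideanSpace ℝ (Fin g) → ℝ := fun x => ∑ α, ∑ β, Y α β * x α * x β with hf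
  have hfc : Continuous f := by
    apply continuous_finset_sum; intro α _; apply continuous_finset_sum; intro β _
    exact (continuous_const.mul (EuclideanSpace.proj α).continuous).mul
      (EuclideanSpace.proj β).continuous
  have key : ∀ x : EuclideanSpace ℝ (Fin g), x ≠ 0 → 0 < f x := by
    intro x hx
    have h := hpos.dotProduct_mulVec_pos (x := x.ofLp) (by
      intro h0; apply hx; ext α; exact congrFun h0 α)
    simpa [f, dotProduct, Matrix.mulVec, Finset.mul_sum, mul_comm, mul_assoc,
      mul_left_comm] using h
  rcases Nat.eq_zero_or_pos g with hg | hg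
  · subst hg
    exact ⟨1, one_pos, fun x => by simp⟩
  · have hne : (Metric.sphere (0 : EuclideanSpace ℝ (Fin g)) 1).Nonempty := by
      refine ⟨EuclideanSpace.single ⟨0, hg⟩ 1, ?_⟩
      simp [EuclideanSpace.norm_single]
    obtain ⟨x₀, hx₀s, hmin⟩ := (isCompact_sphere (0 : EuclideanSpace ℝ (Fin g)) 1).exists_isMinOn
      hne hfc.continuousOn
    have hx₀ : (x₀ : EuclideanSpace ℝ (Fin g)) ≠ 0 := by
      intro h0
      have := mem_sphere_zero_iff_norm.1 hx₀s
      rw [h0] at this; simp at this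
    refine ⟨f x₀, key x₀ hx₀, fun x => ?_⟩
    set y : EuclideanSpace ℝ (Fin g) := (WithLp.equiv 2 _).symm x with hy
    by_cases hx0 : x = 0
    · subst hx0; simp
    have hyne : y ≠ 0 := by
      intro h0; apply hx0; funext α; exact congrArg (fun w : EuclideanSpace ℝ (Fin g) => w α) h0
    have hr : 0 < ‖y‖ := norm_pos_iff.2 hyne
    set w : EuclideanSpace ℝ (Fin g) := ‖y‖⁻¹ • y with hw
    have hws : w ∈ Metric.sphere (0 : EuclideanSpace ℝ (Fin g)) 1 := by
      rw [mem_sphere_zero_iff_norm, hw, norm_smul, norm_inv, norm_norm]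
      field_simp
    have hfw : f w = ‖y‖⁻¹ * ‖y‖⁻¹ * f y := by
      simp only [hf, hw]
      rw [Finset.mul_sum]
      refine Finset.sum_congr rfl fun α _ => ?_
      rw [Finset.mul_sum]
      refine Finset.sum_congr rfl fun β _ => ?_
      simp only [PiLp.smul_apply, smul_eq_mul]
      ring
    have hle : f x₀ ≤ ‖y‖⁻¹ * ‖y‖⁻¹ * f y := hfw ▸ hmin hws
    have hnorm : ‖y‖ ^ 2 = ∑ α, x α ^ 2 := by
      rw [EuclideanSpace.norm_eq]
      rw [Real.sq_sqrt (by positivity)]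
      refine Finset.sum_congr rfl fun α _ => ?_
      rw [Real.norm_eq_abs, _root_.sq_abs]
      rfl
    have hfyx : f y = ∑ α, ∑ β, Y α β * x α * x β := rfl
    rw [← hnorm, ← hfyx]
    have h1 := mul_le_mul_of_nonneg_right hle (sq_nonneg ‖y‖)
    have h2 : (‖y‖⁻¹ * ‖y‖⁻¹ * f y) * ‖y‖ ^ 2 = f y := by
      field_simp
    linarith

lemma sum_le_prod_one_add {ι : Type*} (s : Finset ι) (x : ι → ℝ) (hx : ∀ i ∈ s, 0 ≤ x i) :
    ∑ i ∈ s, x i ≤ ∏ i ∈ s, (1 + x i) := by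
  classical
  induction s using Finset.induction with
  | empty => simp
  | @insert a s ha ih =>
    rw [Finset.sum_insert ha, Finset.prod_insert ha]
    have h1 : (1:ℝ) ≤ ∏ i ∈ s, (1 + x i) := by
      have := Finset.prod_le_prod (s := s) (f := fun _ => (1:ℝ)) (g := fun i => 1 + x i)
        (by simp) (fun i hi => by linarith [hx i (Finset.mem_insert_of_mem hi)])
      simpa using this
    have h2 := ih fun i hi => hx i (Finset.mem_insert_of_mem hi)
    have h3 : 0 ≤ x a := hx a (Finset.mem_insert_self a s)
    nlinarith

-- real part computation

lemma re_term (g : ℕ) (Ω : Matrix (Fin g) (Fin g) ℂ) (n : Fin g → ℤ) (z : Fin g → ℂ) :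
    ((Real.pi : ℂ) * Complex.I * ∑ α, ∑ β, Ω α β * (n α : ℂ) * (n β : ℂ)
      + 2 * (Real.pi : ℂ) * Complex.I * ∑ α, (n α : ℂ) * z α).re
    = -Real.pi * (∑ α, ∑ β, (Ω α β).im * (n α : ℝ) * (n β : ℝ))
      - 2 * Real.pi * (∑ α, (n α : ℝ) * (z α).im) := by
  simp only [Complex.add_re, Complex.mul_re, Complex.mul_im, Complex.I_re, Complex.I_im,
    Complex.ofReal_re, Complex.ofReal_im, Complex.re_sum, Complex.im_sum,
    Complex.intCast_re, Complex.intCast_im, Complex.re_ofNat, Complex.im_ofNat,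
    Finset.mul_sum]
  ring_nf
  congr 1
  · refine Finset.sum_congr rfl fun α _ => Finset.sum_congr rfl fun β _ => by ring
  · rw [← Finset.sum_neg_distrib]

set_option maxHeartbeats 1000000 in
/-- For `Ω` in the Siegel upper half-space, `z ↦ θ(z, Ω)` is holomorphic
(complex differentiable) on all of `ℂ^g`. -/
theorem theta_holomorphic (g : ℕ) (Ω : Matrix (Fin g) (Fin g) ℂ)
    (hsymm : Ω.IsSymm) (hpos : (Ω.map Complex.im).PosDef) :
    Differentiable ℂ (fun z : Fin g → ℂ => theta g z Ω) := by
  classical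
  obtain ⟨T, hT, hQ⟩ := quad_lb hpos
  simp only [Matrix.map_apply] at hQ
  intro z₀
  set R : ℝ := ‖z₀‖ + 1 with hR
  have hR0 : 0 < R := by positivity
  -- the summable majorant
  set v : ℤ → ℝ := fun t => (1 + |(t : ℝ)|) * Real.exp (-Real.pi * (T * (t : ℝ) ^ 2 - 2 * R * |(t : ℝ)|)) with hv_def
  have hv : Summable v := by
    have h0 := summable_pow_mul_jacobiTheta₂_term_bound R hT 0
    have h1 := summable_pow_mul_jacobiTheta₂_term_bound R hT 1
    refine ((h0.add h1).congr fun t => ?_)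
    push_cast
    ring
  have hv0 : ∀ t, 0 ≤ v t := fun t => by positivity
  have hv1 : ∀ t : ℤ, Real.exp (-Real.pi * (T * (t : ℝ) ^ 2 - 2 * R * |(t : ℝ)|)) ≤ v t := by
    intro t
    rw [hv_def]
    dsimp only
    nlinarith [Real.exp_pos (-Real.pi * (T * (t : ℝ) ^ 2 - 2 * R * |(t : ℝ)|)), abs_nonneg (t : ℝ)]
  set u : (Fin g → ℤ) → ℝ := fun n => (2 * Real.pi) * ∏ α, v (n α) with hu_def
  have hu : Summable u := (summable_pi_prod hv hv0).mul_left _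
  -- the functions and their derivatives
  set f : (Fin g → ℤ) → (Fin g → ℂ) → ℂ := fun n z =>
    Complex.exp ((Real.pi : ℂ) * Complex.I * ∑ α, ∑ β, Ω α β * (n α : ℂ) * (n β : ℂ)
      + 2 * (Real.pi : ℂ) * Complex.I * ∑ α, (n α : ℂ) * z α) with hf_def
  set ℓ : (Fin g → ℤ) → ((Fin g → ℂ) →L[ℂ] ℂ) := fun n =>
    ∑ α, (n α : ℂ) • (ContinuousLinearMap.proj (R := ℂ) (φ := fun _ : Fin g => ℂ) α) with hl_def
  have hl_apply : ∀ n (x : Fin g → ℂ), ℓ n x = ∑ α, (n α : ℂ) * x α := by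
    intro n x
    simp [hl_def, ContinuousLinearMap.sum_apply]
  set f' : (Fin g → ℤ) → (Fin g → ℂ) → ((Fin g → ℂ) →L[ℂ] ℂ) := fun n z =>
    f n z • ((2 * (Real.pi : ℂ) * Complex.I) • ℓ n) with hf'_def
  have hder : ∀ n z, HasFDerivAt (f n) (f' n z) z := by
    intro n z
    have h1 : HasFDerivAt (fun z : Fin g → ℂ => ∑ α, (n α : ℂ) * z α) (ℓ n) z := by
      have := (ℓ n).hasFDerivAt (x := z)
      have heq : ⇑(ℓ n) = fun z : Fin g → ℂ => ∑ α, (n α : ℂ) * z α := funext fun x => hl_apply n x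
      rwa [heq] at this
    have h2 := ((h1.const_mul (2 * (Real.pi : ℂ) * Complex.I)).const_add
      ((Real.pi : ℂ) * Complex.I * ∑ α, ∑ β, Ω α β * (n α : ℂ) * (n β : ℂ))).cexp
    exact h2
  -- norm bound for f on the ball
  have hfb : ∀ n z, z ∈ Metric.ball z₀ 1 →
      ‖f n z‖ ≤ ∏ α, Real.exp (-Real.pi * (T * (n α : ℝ) ^ 2 - 2 * R * |(n α : ℝ)|)) := by
    intro n z hz
    rw [hf_def]
    simp only [Complex.norm_exp]
    rw [re_term, ← Real.exp_sum]
    apply Real.exp_le_exp.2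
    have him : ∀ α, |(z α).im| ≤ R := by
      intro α
      have h1 : ‖z α‖ ≤ ‖z‖ := norm_le_pi_norm z α
      have h2 : ‖z‖ ≤ ‖z₀‖ + 1 := by
        have := mem_ball_iff_norm.1 hz
        calc ‖z‖ = ‖z₀ + (z - z₀)‖ := by ring_nf
        _ ≤ ‖z₀‖ + ‖z - z₀‖ := norm_add_le _ _
        _ ≤ ‖z₀‖ + 1 := by linarith
      have h3 := Complex.abs_im_le_norm (z α)
      linarith
    have key1 : T * (∑ α, (n α : ℝ) ^ 2) ≤ ∑ α, ∑ β, (Ω α β).im * (n α : ℝ) * (n β : ℝ) :=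
      hQ (fun α => (n α : ℝ))
    have key2 : -(∑ α, (n α : ℝ) * (z α).im) ≤ R * ∑ α, |(n α : ℝ)| := by
      rw [Finset.mul_sum, ← Finset.sum_neg_distrib]
      refine Finset.sum_le_sum fun α _ => ?_
      calc -((n α : ℝ) * (z α).im) ≤ |(n α : ℝ) * (z α).im| := neg_le_abs _
      _ = |(n α : ℝ)| * |(z α).im| := abs_mul _ _
      _ ≤ |(n α : ℝ)| * R := mul_le_mul_of_nonneg_left (him α) (abs_nonneg _)
      _ = R * |(n α : ℝ)| := mul_comm _ _
    have expand : ∑ α, -Real.pi * (T * (n α : ℝ) ^ 2 - 2 * R * |(n α : ℝ)|)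
        = -Real.pi * (T * ∑ α, (n α : ℝ) ^ 2) + 2 * Real.pi * R * ∑ α, |(n α : ℝ)| := by
      simp only [Finset.mul_sum, ← Finset.sum_add_distrib]
      exact Finset.sum_congr rfl fun α _ => by ring
    rw [expand]
    have pi_pos := Real.pi_pos
    nlinarith [mul_le_mul_of_nonneg_left key1 Real.pi_pos.le,
      mul_le_mul_of_nonneg_left key2 (by positivity : (0:ℝ) ≤ 2 * Real.pi)]
  -- operator norm bound
  have hop : ∀ n : Fin g → ℤ, ‖(2 * (Real.pi : ℂ) * Complex.I) • ℓ n‖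
      ≤ 2 * Real.pi * ∑ α, |(n α : ℝ)| := by
    intro n
    apply ContinuousLinearMap.opNorm_le_bound _ (by positivity)
    intro x
    rw [ContinuousLinearMap.smul_apply, norm_smul, hl_apply]
    have h1 : ‖(2 * (Real.pi : ℂ) * Complex.I)‖ = 2 * Real.pi := by
      simp [norm_mul, Real.pi_nonneg]
    rw [h1]
    have h2 : ‖∑ α, (n α : ℂ) * x α‖ ≤ (∑ α, |(n α : ℝ)|) * ‖x‖ := by
      rw [Finset.sum_mul]
      refine (norm_sum_le _ _).trans (Finset.sum_le_sum fun α _ => ?_)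
      rw [norm_mul]
      have h3 : ‖(n α : ℂ)‖ = |(n α : ℝ)| := by
        rw [show ((n α : ℂ)) = (((n α : ℝ) : ℂ)) by push_cast; rfl, Complex.norm_real,
          Real.norm_eq_abs]
      rw [h3]
      exact mul_le_mul_of_nonneg_left (norm_le_pi_norm x α) (abs_nonneg _)
    calc 2 * Real.pi * ‖∑ α, (n α : ℂ) * x α‖
        ≤ 2 * Real.pi * ((∑ α, |(n α : ℝ)|) * ‖x‖) := by
          exact mul_le_mul_of_nonneg_left h2 (by positivity)
      _ = 2 * Real.pi * (∑ α, |(n α : ℝ)|) * ‖x‖ := by ring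
  -- norm bound for the derivatives
  have hf'b : ∀ n z, z ∈ Metric.ball z₀ 1 → ‖f' n z‖ ≤ u n := by
    intro n z hz
    rw [hf'_def]
    dsimp only
    rw [norm_smul (f n z) ((2 * (Real.pi : ℂ) * Complex.I) • ℓ n)]
    have hfb' := hfb n z hz
    have hEpos : (0:ℝ) ≤ ∏ α, Real.exp (-Real.pi * (T * (n α : ℝ) ^ 2 - 2 * R * |(n α : ℝ)|)) :=
      Finset.prod_nonneg fun α _ => (Real.exp_pos _).le
    calc ‖f n z‖ * ‖(2 * (Real.pi : ℂ) * Complex.I) • ℓ n‖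
        ≤ (∏ α, Real.exp (-Real.pi * (T * (n α : ℝ) ^ 2 - 2 * R * |(n α : ℝ)|)))
          * (2 * Real.pi * ∑ α, |(n α : ℝ)|) :=
          mul_le_mul hfb' (hop n) (norm_nonneg _) hEpos
      _ = 2 * Real.pi * ((∑ α, |(n α : ℝ)|)
          * ∏ α, Real.exp (-Real.pi * (T * (n α : ℝ) ^ 2 - 2 * R * |(n α : ℝ)|))) := by ring
      _ ≤ 2 * Real.pi * ((∏ α, (1 + |(n α : ℝ)|))
          * ∏ α, Real.exp (-Real.pi * (T * (n α : ℝ) ^ 2 - 2 * R * |(n α : ℝ)|))) := by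
          have hs := sum_le_prod_one_add Finset.univ (fun α => |(n α : ℝ)|)
            (fun _ _ => abs_nonneg _)
          have := mul_le_mul_of_nonneg_right hs hEpos
          nlinarith [Real.pi_pos]
      _ = 2 * Real.pi * ∏ α, v (n α) := by
          rw [← Finset.prod_mul_distrib]
      _ = u n := rfl
  -- summability at the center
  have hf0 : Summable fun n => f n z₀ := by
    refine Summable.of_norm_bounded (summable_pi_prod hv hv0) fun n => ?_
    refine (hfb n z₀ (Metric.mem_ball_self one_pos)).trans ?_
    exact Finset.prod_le_prod (fun _ _ => (Real.exp_pos _).le) (fun α _ => hv1 (n α))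
  have hmain := hasFDerivAt_tsum_of_isPreconnected hu Metric.isOpen_ball
    (convex_ball z₀ 1).isPreconnected (fun n z _ => hder n z) hf'b
    (Metric.mem_ball_self one_pos) hf0 (Metric.mem_ball_self one_pos)
  have hthet : (fun z : Fin g → ℂ => theta g z Ω) = fun z => ∑' n, f n z := by
    funext z
    rw [theta, hf_def]
  rw [hthet]
  exact hmain.differentiableAt
end

section
/- Let A be a complete normed (Banach) algebra over ℂ and let K_1, …, K_n ∈ A be such that every commutator [K_i, K_j] = K_i K_j − K_j K_i commutes with every K_l (1 ≤ i, j, l ≤ n). Then exp(K_1)·exp(K_2)·⋯·exp(K_n) = exp((1/2) Σ_{i<j} [K_i, K_j]) · exp(K_1 + ⋯ + K_n). -/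
open NormedSpace

section helpers

variable {A : Type*} [NormedRing A] [NormedAlgebra ℂ A] [NormedAlgebra ℚ A] [CompleteSpace A]

private lemma conj_key (a b : A) (h : Commute (a * b - b * a) a) (t : ℝ) :
    exp (t • a) * b = (b + t • (a * b - b * a)) * exp (t • a) := by
  set c := a * b - b * a with hc
  have hca : c * a = a * c := h.eq
  have hfun : ∀ s : ℝ, HasDerivAt
      (fun u : ℝ => exp (u • (-a)) * ((b + u • c) * exp (u • a))) 0 s := by
    intro s
    have h1 : HasDerivAt (fun u : ℝ => exp (u • (-a))) (exp (s • (-a)) * (-a)) s :=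
      hasDerivAt_exp_smul_const (-a) s
    have h2 : HasDerivAt (fun u : ℝ => b + u • c) c s := by
      simpa using ((hasDerivAt_id s).smul_const c).const_add b
    have h3 : HasDerivAt (fun u : ℝ => exp (u • a)) (a * exp (s • a)) s :=
      hasDerivAt_exp_smul_const' a s
    have h5 := h1.mul (h2.mul h3)
    convert h5 using 1
    · rfl
    symm
    have key : -(a * (b + s • c)) + (c + (b + s • c) * a) = 0 := by
      simp only [mul_add, add_mul, mul_smul_comm, smul_mul_assoc, hca]
      rw [hc]
      abel
    calc exp (s • (-a)) * (-a) * ((b + s • c) * exp (s • a)) +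
        exp (s • (-a)) * (c * exp (s • a) + (b + s • c) * (a * exp (s • a)))
        = exp (s • (-a)) *
            ((-(a * (b + s • c)) + (c + (b + s • c) * a)) * exp (s • a)) := by
          simp only [mul_add, add_mul, neg_mul, mul_neg, smul_mul_assoc, mul_smul_comm,
            mul_assoc]
          module
      _ = 0 := by rw [key, zero_mul, mul_zero]
  have hdiff : Differentiable ℝ
      (fun u : ℝ => exp (u • (-a)) * ((b + u • c) * exp (u • a))) :=
    fun s => (hfun s).differentiableAt
  have hconst := is_const_of_deriv_eq_zero hdiff (fun s => (hfun s).deriv) t 0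
  simp only [zero_smul, exp_zero, one_mul, mul_one, add_zero] at hconst
  have hinv : exp (t • a) * exp (t • (-a)) = 1 := by
    rw [← exp_add_of_commute ((((Commute.refl a).neg_right).smul_left t).smul_right t)]
    simp [smul_neg]
  calc exp (t • a) * b
      = exp (t • a) * (exp (t • (-a)) * ((b + t • c) * exp (t • a))) := by rw [hconst]
    _ = (exp (t • a) * exp (t • (-a))) * ((b + t • c) * exp (t • a)) := by
        rw [mul_assoc]
    _ = (b + t • c) * exp (t • a) := by rw [hinv, one_mul]

private lemma weyl (a b : A) (ha : Commute (a * b - b * a) a)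
    (hb : Commute (a * b - b * a) b) :
    exp a * exp b = exp ((2⁻¹ : ℝ) • (a * b - b * a)) * exp (a + b) := by
  set c := a * b - b * a with hc
  have hcab : Commute c (-(a + b)) := (ha.add_right hb).neg_right
  have conj1 : ∀ s : ℝ, exp (s • a) * b = (b + s • c) * exp (s • a) :=
    fun s => conj_key a b ha s
  have hcomm2 : (-(a + b)) * a - a * (-(a + b)) = c := by rw [hc]; noncomm_ring
  have hcomm3 : (-(a + b)) * b - b * (-(a + b)) = -c := by rw [hc]; noncomm_ring
  have conj2 : ∀ s : ℝ, exp (s • (-(a + b))) * a = (a + s • c) * exp (s • (-(a + b))) := by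
    intro s
    have := conj_key (-(a + b)) a (by rw [hcomm2]; exact hcab) s
    rwa [hcomm2] at this
  have conj3 : ∀ s : ℝ, exp (s • (-(a + b))) * b = (b - s • c) * exp (s • (-(a + b))) := by
    intro s
    have := conj_key (-(a + b)) b (by rw [hcomm3]; exact hcab.neg_left) s
    rw [hcomm3] at this
    rwa [show b + s • -c = b - s • c by rw [smul_neg, sub_eq_add_neg]] at this
  set g : ℝ → ℝ := fun u => -(u ^ 2 / 2) with hg
  have hfun : ∀ s : ℝ, HasDerivAt (fun u : ℝ =>
      exp (g u • c) * (exp (u • (-(a + b))) * (exp (u • a) * exp (u • b)))) 0 s := by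
    intro s
    have hgd : HasDerivAt g (-s) s := by
      have := ((hasDerivAt_pow 2 s).div_const 2).neg
      exact this.congr_deriv (by simp)
    have h1 : HasDerivAt (fun u : ℝ => exp (g u • c)) ((-s) • (c * exp (g s • c))) s := by
      have := (hasDerivAt_exp_smul_const' c (g s)).scomp s hgd
      simpa [Function.comp_def] using this
    have h2 : HasDerivAt (fun u : ℝ => exp (u • (-(a + b))))
        ((-(a + b)) * exp (s • (-(a + b)))) s := hasDerivAt_exp_smul_const' _ s
    have h3 : HasDerivAt (fun u : ℝ => exp (u • a)) (a * exp (s • a)) s :=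
      hasDerivAt_exp_smul_const' a s
    have h4 : HasDerivAt (fun u : ℝ => exp (u • b)) (b * exp (s • b)) s :=
      hasDerivAt_exp_smul_const' b s
    have h5 := h1.mul (h2.mul (h3.mul h4))
    convert h5 using 1
    · rfl
    symm
    set E1 := exp (g s • c) with hE1
    set E2 := exp (s • (-(a + b))) with hE2def
    set E3 := exp (s • a)
    set E4 := exp (s • b)
    set P := E1 * (E2 * (E3 * E4)) with hP
    have hE1c : Commute c E1 := ((Commute.refl c).smul_right (g s)).exp_right
    have hE1a : Commute a E1 := (ha.symm.smul_right (g s)).exp_right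
    have hE1b : Commute b E1 := (hb.symm.smul_right (g s)).exp_right
    have hE1ab : Commute (-(a + b)) E1 := (hE1a.add_left hE1b).neg_left
    have hE2c : Commute c E2 := (hcab.smul_right s).exp_right
    have TA : ((-s) • (c * E1)) * (E2 * (E3 * E4)) = ((-s) • c) * P := by
      rw [smul_mul_assoc, smul_mul_assoc, mul_assoc, hP]
    have TB : E1 * (((-(a + b)) * E2) * (E3 * E4)) = (-(a + b)) * P := by
      rw [mul_assoc ((-(a+b))) E2, ← mul_assoc E1, hE1ab.symm.eq, mul_assoc, hP]
    have TC : E1 * (E2 * ((a * E3) * E4)) = (a + s • c) * P := by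
      rw [mul_assoc a E3, ← mul_assoc E2, conj2 s, mul_assoc (a + s • c) E2,
        ← mul_assoc E1,
        show E1 * (a + s • c) = (a + s • c) * E1 from
          (hE1a.symm.add_right (hE1c.symm.smul_right s)).eq,
        mul_assoc, hP]
    have TD : E1 * (E2 * (E3 * (b * E4))) = b * P := by
      have hE2bc : E2 * (b + s • c) = b * E2 := by
        rw [mul_add, conj3 s, mul_smul_comm, hE2c.symm.eq, sub_mul, smul_mul_assoc]
        abel
      rw [← mul_assoc E3 b, conj1 s, mul_assoc (b + s • c) E3, ← mul_assoc E2, hE2bc,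
        mul_assoc b E2, ← mul_assoc E1, hE1b.symm.eq, mul_assoc, hP]
    calc ((-s) • (c * E1)) * (E2 * (E3 * E4)) +
        E1 * (((-(a + b)) * E2) * (E3 * E4) + E2 * ((a * E3) * E4 + E3 * (b * E4)))
        = ((-s) • c) * P + ((-(a + b)) * P + ((a + s • c) * P + b * P)) := by
          rw [mul_add, mul_add, mul_add, TA, TB, TC, TD]
      _ = 0 := by
          simp only [add_mul, neg_mul, neg_smul]
          abel
  have hdiff : Differentiable ℝ (fun u : ℝ =>
      exp (g u • c) * (exp (u • (-(a + b))) * (exp (u • a) * exp (u • b)))) :=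
    fun s => (hfun s).differentiableAt
  have hconst := is_const_of_deriv_eq_zero hdiff (fun s => (hfun s).deriv) 1 0
  have hg0 : g 0 = 0 := by simp [hg]
  have hg1 : g 1 = -(2⁻¹ : ℝ) := by norm_num [hg]
  rw [hg1, hg0, neg_smul] at hconst
  simp only [zero_smul, exp_zero, one_mul, mul_one, one_smul] at hconst
  -- hconst : exp (-(2⁻¹:ℝ) • c) * (exp (-(a+b)) * (exp a * exp b)) = 1
  set u : A := exp ((2⁻¹ : ℝ) • c) with hu
  set u' : A := exp (-((2⁻¹ : ℝ) • c)) with hu'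
  set v : A := exp (a + b) with hv
  set v' : A := exp (-(a + b)) with hv'
  have huu' : u * u' = 1 := by
    rw [hu, hu', ← exp_add_of_commute (Commute.refl ((2⁻¹ : ℝ) • c)).neg_right,
      add_neg_cancel, exp_zero]
  have hvv' : v * v' = 1 := by
    rw [hv, hv', ← exp_add_of_commute (Commute.refl (a + b)).neg_right]
    rw [add_neg_cancel, exp_zero]
  have hvu' : u' * v = v * u' :=
    ((((ha.add_right hb).smul_left (2⁻¹ : ℝ)).neg_left).exp).eq
  -- hconst : u' * (v' * (exp a * exp b)) = 1
  calc exp a * exp b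
      = (u * u') * ((v * v') * (exp a * exp b)) := by rw [huu', hvv', one_mul, one_mul]
    _ = u * (v * (u' * (v' * (exp a * exp b)))) := by
        simp only [mul_assoc]
        rw [← mul_assoc u' v, hvu', mul_assoc]
    _ = u * v := by rw [hconst, mul_one]

end helpers

private lemma main_aux {A : Type*} [NormedRing A] [NormedAlgebra ℂ A] [NormedAlgebra ℚ A]
    [CompleteSpace A]
    (n : ℕ) : ∀ (K : Fin n → A),
    (∀ i j l : Fin n, Commute (K i * K j - K j * K i) (K l)) →
    (List.ofFn fun i => exp (K i)).prod =
      exp ((2⁻¹ : ℝ) • ∑ i, ∑ j, if i < j then K i * K j - K j * K i else 0) *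
        exp (∑ i, K i) := by
  induction n with
  | zero =>
    intro K _
    simp [NormedSpace.exp_zero]
  | succ n IH =>
    intro K hcomm
    set a := K 0 with haK
    set K' : Fin n → A := fun i => K i.succ with hK'
    have hcomm' : ∀ i j l : Fin n, Commute (K' i * K' j - K' j * K' i) (K' l) :=
      fun i j l => hcomm i.succ j.succ l.succ
    have IH' := IH K' hcomm'
    set S' : A := ∑ i, ∑ j, if i < j then K' i * K' j - K' j * K' i else 0 with hS'
    set B : A := ∑ i, K' i with hB
    have hABdiff : a * B - B * a = ∑ i, (a * K' i - K' i * a) := by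
      rw [hB, Finset.mul_sum, Finset.sum_mul, ← Finset.sum_sub_distrib]
    -- the commutator [a, B] commutes with every K l
    have hcl : ∀ l : Fin (n + 1), Commute (a * B - B * a) (K l) := by
      intro l
      rw [hABdiff]
      exact Commute.sum_left _ _ _ fun i _ => hcomm 0 i.succ l
    have ha : Commute (a * B - B * a) a := hcl 0
    have hbB : Commute (a * B - B * a) B :=
      Commute.sum_right _ _ _ fun i _ => hcl i.succ
    -- every summand of S' commutes with everything relevant
    have hS'l : ∀ l : Fin (n + 1), Commute S' (K l) := by
      intro l
      rw [hS']
      refine Commute.sum_left _ _ _ fun i _ => Commute.sum_left _ _ _ fun j _ => ?_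
      split_ifs
      · exact hcomm i.succ j.succ l
      · exact Commute.zero_left _
    have hS'a : Commute S' a := hS'l 0
    have hS'c : Commute S' (a * B - B * a) := by
      rw [hABdiff]
      refine Commute.sum_right _ _ _ fun i _ => ?_
      exact ((hS'l 0).mul_right (hS'l i.succ)).sub_right ((hS'l i.succ).mul_right (hS'l 0))
    -- sum decomposition
    have hsum : (∑ i, ∑ j, if i < j then K i * K j - K j * K i else 0) =
        (a * B - B * a) + S' := by
      rw [Fin.sum_univ_succ]
      congr 1
      · rw [Fin.sum_univ_succ, hABdiff]
        simp [Fin.succ_pos, haK, hK']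
      · rw [hS']
        refine Finset.sum_congr rfl fun i _ => ?_
        rw [Fin.sum_univ_succ]
        simp [Fin.succ_lt_succ_iff, hK']
    have htot : (∑ i, K i) = a + B := by
      rw [Fin.sum_univ_succ, hB]
    calc (List.ofFn fun i => exp (K i)).prod
        = exp a * (List.ofFn fun i : Fin n => exp (K' i)).prod := by
          rw [List.ofFn_succ, List.prod_cons]
      _ = exp a * (exp ((2⁻¹ : ℝ) • S') * exp B) := by rw [IH']
      _ = exp ((2⁻¹ : ℝ) • S') * (exp a * exp B) := by
          rw [← mul_assoc, ((hS'a.smul_left (2⁻¹ : ℝ)).exp).symm.eq, mul_assoc]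
      _ = exp ((2⁻¹ : ℝ) • S') * (exp ((2⁻¹ : ℝ) • (a * B - B * a)) * exp (a + B)) := by
          rw [weyl a B ha hbB]
      _ = (exp ((2⁻¹ : ℝ) • S') * exp ((2⁻¹ : ℝ) • (a * B - B * a))) * exp (a + B) :=
          (mul_assoc _ _ _).symm
      _ = exp ((2⁻¹ : ℝ) • S' + (2⁻¹ : ℝ) • (a * B - B * a)) * exp (a + B) := by
          rw [exp_add_of_commute ((hS'c.smul_left (2⁻¹ : ℝ)).smul_right (2⁻¹ : ℝ))]
      _ = exp ((2⁻¹ : ℝ) • ∑ i, ∑ j, if i < j then K i * K j - K j * K i else 0) *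
            exp (∑ i, K i) := by
          rw [hsum, htot, smul_add, add_comm ((2⁻¹ : ℝ) • (a * B - B * a))]

/-- In a complete normed algebra over `ℂ`, if all the commutators
`[K_i, K_j] = K_i K_j − K_j K_i` commute with every `K_l`, then
`exp(K₁) ⋯ exp(Kₙ) = exp((1/2) Σ_{i<j} [K_i, K_j]) · exp(K₁ + ⋯ + Kₙ)`. -/
theorem exp_prod_of_central_commutators (A : Type*) [NormedRing A] [NormedAlgebra ℂ A]
    [CompleteSpace A] (n : ℕ) (K : Fin n → A)
    (hcomm : ∀ i j l : Fin n, Commute (K i * K j - K j * K i) (K l)) :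
    (List.ofFn fun i => NormedSpace.exp (K i)).prod =
      NormedSpace.exp
          ((1 / 2 : ℂ) • ∑ i, ∑ j, if i < j then K i * K j - K j * K i else 0) *
        NormedSpace.exp (∑ i, K i) := by
  let +nondep : NormedAlgebra ℚ A := .restrictScalars ℚ ℂ A
  have hsmul : ∀ x : A, (1 / 2 : ℂ) • x = (2⁻¹ : ℝ) • x := by
    intro x
    rw [show ((1 / 2 : ℂ)) = (((2⁻¹ : ℝ) : ℂ)) by norm_num, ← smul_one_smul ℂ (2⁻¹ : ℝ) x]
    norm_num
  rw [hsmul]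
  exact main_aux n K hcomm
end
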